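/- Let λ, τ ∈ ℂ with sinh(λ/2) ≠ 0 and cosh(λ/2) ≠ 0, and define u(ξ) = (ξ·sinh(λ/2) + cosh(λ/2))/(−ξ·sinh(λ/2) + cosh(λ/2)) and v(ξ) = (ξ·cosh(λ/2) − sinh(λ/2))/(ξ·cosh(λ/2) + sinh(λ/2)). Then for every ζ ∈ ℂ for which all the relevant denominators are nonzero (namely the denominator of the Möbius action T(λ,τ)·ζ, the denominator of u at T(λ,τ)·ζ, and ζ·cosh(λ/2) + sinh(λ/2)), one has u(T(λ,τ)·ζ) · v(ζ) = −e^{−τ}. -/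

import Mathlib

open Matrix

/-- `T(λ,τ) = [[cosh(τ/2)·coth(λ/2), −sinh(τ/2)], [−sinh(τ/2), cosh(τ/2)·tanh(λ/2)]]` -/
noncomputable def Tmat (l τ : ℂ) : Matrix (Fin 2) (Fin 2) ℂ :=
  !![Complex.cosh (τ/2) * (Complex.cosh (l/2) / Complex.sinh (l/2)), -Complex.sinh (τ/2);
     -Complex.sinh (τ/2), Complex.cosh (τ/2) * (Complex.sinh (l/2) / Complex.cosh (l/2))]

/-- The Möbius action of a 2×2 matrix on ℂ. -/
noncomputable def moebius (M : Matrix (Fin 2) (Fin 2) ℂ) (z : ℂ) : ℂ :=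
  (M 0 0 * z + M 0 1) / (M 1 0 * z + M 1 1)

/-- `u(ξ) = (ξ·sinh(λ/2) + cosh(λ/2))/(−ξ·sinh(λ/2) + cosh(λ/2))` -/
noncomputable def uCoord (l ξ : ℂ) : ℂ :=
  (ξ * Complex.sinh (l/2) + Complex.cosh (l/2)) /
    (-ξ * Complex.sinh (l/2) + Complex.cosh (l/2))

/-- `v(ξ) = (ξ·cosh(λ/2) − sinh(λ/2))/(ξ·cosh(λ/2) + sinh(λ/2))` -/
noncomputable def vCoord (l ξ : ℂ) : ℂ :=
  (ξ * Complex.cosh (l/2) - Complex.sinh (l/2)) /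
    (ξ * Complex.cosh (l/2) + Complex.sinh (l/2))

theorem plumbing_identity (l τ ζ : ℂ) (h1 : Complex.sinh (l/2) ≠ 0)
    (h2 : Complex.cosh (l/2) ≠ 0)
    (hden1 : Tmat l τ 1 0 * ζ + Tmat l τ 1 1 ≠ 0)
    (hden2 : -(moebius (Tmat l τ) ζ) * Complex.sinh (l/2) + Complex.cosh (l/2) ≠ 0)
    (hden3 : ζ * Complex.cosh (l/2) + Complex.sinh (l/2) ≠ 0) :
    uCoord l (moebius (Tmat l τ) ζ) * vCoord l ζ = -Complex.exp (-τ) := by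
  have hl : Complex.cosh (l/2)^2 - Complex.sinh (l/2)^2 = 1 :=
    Complex.cosh_sq_sub_sinh_sq _
  have hE : Complex.exp (-τ) =
      (Complex.cosh (τ/2) - Complex.sinh (τ/2))^2 := by
    rw [Complex.cosh_sub_sinh, sq, ← Complex.exp_add]; ring_nf
  simp only [Tmat, Matrix.cons_val', Matrix.cons_val_zero, Matrix.cons_val_one,
    Matrix.head_cons, Matrix.head_fin_const, Matrix.of_apply, Matrix.empty_val',
    Matrix.cons_val_fin_one] at hden1 hden2 ⊢
  simp only [moebius, Tmat, Matrix.cons_val', Matrix.cons_val_zero, Matrix.cons_val_one,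
    Matrix.head_cons, Matrix.head_fin_const, Matrix.of_apply, Matrix.empty_val',
    Matrix.cons_val_fin_one, uCoord, vCoord] at hden2 ⊢
  set s := Complex.sinh (l/2)
  set c := Complex.cosh (l/2)
  set S := Complex.sinh (τ/2)
  set C := Complex.cosh (τ/2)
  have hτ : C^2 - S^2 = 1 := Complex.cosh_sq_sub_sinh_sq _
  have hD : C*s - S*c*ζ ≠ 0 := by
    have h : C*s - S*c*ζ = c * (-S*ζ + C*(s/c)) := by field_simp; ring
    rw [h]; exact mul_ne_zero h2 hden1
  have hQ : s*(C*s - S*c*ζ) ≠ 0 := mul_ne_zero h1 hD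
  have hm : (C * (c / s) * ζ + -S) / (-S * ζ + C * (s / c)) =
      (c*(C*c*ζ - S*s)) / (s*(C*s - S*c*ζ)) := by
    rw [div_eq_div_iff hden1 hQ]; field_simp; ring
  rw [hm] at hden2 ⊢
  rw [hE]
  have hD2 : C * s - c * ζ * S ≠ 0 := by
    intro h0; exact hD (by linear_combination h0)
  have hden3' : c * ζ + s ≠ 0 := by
    intro h0; exact hden3 (by linear_combination h0)
  field_simp at hden2
  have hK : -(c * C * ζ - S * s) + (C * s - c * ζ * S) ≠ 0 := by
    intro h0; apply hden2; rw [h0]; simp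
  field_simp
  linear_combination (-((C - S)*(c*ζ+s)*(c*ζ-s))) * hτ
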